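/- arXiv:2007.05377 — 2 statements merged into one kernel-verified Lean document; each statement's English description precedes it below -/
import Mathlib

section
/- Let n, r be positive integers, let U be a real n×r matrix with rows u_1, …, u_n, and for a finite set S ⊆ {1, …, n} let C_S denote the matrix whose rows are the rows u_i of U for i ∈ S. Fix ε > 0 and define the set function f_A(S) = −tr[(C_Sᵀ C_S + ε I)⁻¹] + r/ε. Then f_A is monotone increasing: for all S ⊆ T ⊆ {1, …, n}, f_A(S) ≤ f_A(T). -/
open Matrix

/-- The measurement matrix `C_S` whose rows are the rows `u_i` of `U` for `i ∈ S`. -/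
def sensorMatrix {n r : ℕ} (U : Matrix (Fin n) (Fin r) ℝ) (S : Finset (Fin n)) :
    Matrix {i // i ∈ S} (Fin r) ℝ :=
  Matrix.of fun i j => U i.1 j

/-- The A-optimality objective `f_A(S) = -tr[(C_Sᵀ C_S + ε I)⁻¹] + r/ε`. -/
noncomputable def fA {n r : ℕ} (U : Matrix (Fin n) (Fin r) ℝ) (ε : ℝ)
    (S : Finset (Fin n)) : ℝ :=
  - ((sensorMatrix U S)ᵀ * sensorMatrix U S
      + ε • (1 : Matrix (Fin r) (Fin r) ℝ))⁻¹.trace + r / ε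

lemma gram_psd {n r : ℕ} (U : Matrix (Fin n) (Fin r) ℝ) (S : Finset (Fin n)) :
    ((sensorMatrix U S)ᵀ * sensorMatrix U S).PosSemidef := by
  have := Matrix.posSemidef_conjTranspose_mul_self (sensorMatrix U S)
  rwa [Matrix.conjTranspose_eq_transpose_of_trivial] at this

lemma gram_apply {n r : ℕ} (U : Matrix (Fin n) (Fin r) ℝ) (S : Finset (Fin n))
    (j k : Fin r) :
    ((sensorMatrix U S)ᵀ * sensorMatrix U S) j k = ∑ i ∈ S, U i j * U i k := by
  rw [Matrix.mul_apply]
  simp only [Matrix.transpose_apply, sensorMatrix, Matrix.of_apply]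
  exact Finset.sum_coe_sort S fun i => U i j * U i k

lemma trace_nonneg_of_posSemidef {r : ℕ} {M : Matrix (Fin r) (Fin r) ℝ}
    (hM : M.PosSemidef) : 0 ≤ M.trace := by
  rw [Matrix.trace]
  apply Finset.sum_nonneg
  intro i _
  exact hM.diag_nonneg

/-- The A-optimality objective `f_A` is monotone increasing. -/
theorem fA_monotone {n r : ℕ} (hn : 0 < n) (hr : 0 < r)
    (U : Matrix (Fin n) (Fin r) ℝ) (ε : ℝ) (hε : 0 < ε)
    (S T : Finset (Fin n)) (hST : S ⊆ T) :
    fA U ε S ≤ fA U ε T := by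
  set A := (sensorMatrix U S)ᵀ * sensorMatrix U S + ε • (1 : Matrix (Fin r) (Fin r) ℝ) with hAdef
  set B := (sensorMatrix U T)ᵀ * sensorMatrix U T + ε • (1 : Matrix (Fin r) (Fin r) ℝ) with hBdef
  have hone : (ε • (1 : Matrix (Fin r) (Fin r) ℝ)).PosDef := by
    have : ε • (1 : Matrix (Fin r) (Fin r) ℝ) = Matrix.diagonal (fun _ => ε) := by
      ext i j
      by_cases h : i = j <;> simp [Matrix.diagonal, Matrix.one_apply, h]
    rw [this]
    exact Matrix.posDef_diagonal_iff.mpr fun _ => hε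
  have hA : A.PosDef := Matrix.PosDef.posSemidef_add (gram_psd U S) hone
  have hB : B.PosDef := Matrix.PosDef.posSemidef_add (gram_psd U T) hone
  have hD : (B - A).PosSemidef := by
    have hBA : B - A = (sensorMatrix U (T \ S))ᵀ * sensorMatrix U (T \ S) := by
      ext j k
      simp only [hAdef, hBdef, Matrix.sub_apply, Matrix.add_apply, gram_apply]
      have := Finset.sum_sdiff (f := fun i => U i j * U i k) hST
      linarith
    rw [hBA]
    exact gram_psd U (T \ S)
  have hAu : A * A⁻¹ = 1 := Matrix.mul_nonsing_inv A hA.det_pos.ne'.isUnit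
  have hAu' : A⁻¹ * A = 1 := Matrix.nonsing_inv_mul A hA.det_pos.ne'.isUnit
  have hBu : B * B⁻¹ = 1 := Matrix.mul_nonsing_inv B hB.det_pos.ne'.isUnit
  have hBu' : B⁻¹ * B = 1 := Matrix.nonsing_inv_mul B hB.det_pos.ne'.isUnit
  -- Key: A⁻¹ - B⁻¹ is positive semidefinite
  have hX : ((B - A) * A⁻¹ * (B - A) + (B - A)).PosSemidef := by
    have h1 := (hA.inv.posSemidef).conjTranspose_mul_mul_same (B - A)
    rw [hD.isHermitian.eq] at h1
    exact h1.add hD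
  haveI := hA.isUnit.invertible
  haveI := hB.isUnit.invertible
  have hkey : A⁻¹ - B⁻¹ = B⁻¹ * ((B - A) * A⁻¹ * (B - A) + (B - A)) * B⁻¹ := by
    have expand : (B - A) * A⁻¹ * (B - A) + (B - A) = B * A⁻¹ * B - B := by
      simp only [Matrix.sub_mul, Matrix.mul_sub, Matrix.mul_assoc,
        Matrix.mul_inv_cancel_left_of_invertible, Matrix.inv_mul_cancel_left_of_invertible,
        Matrix.mul_inv_of_invertible, Matrix.inv_mul_of_invertible,
        Matrix.mul_one, Matrix.one_mul]
      abel
    rw [expand]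
    simp only [Matrix.sub_mul, Matrix.mul_sub, Matrix.mul_assoc,
      Matrix.mul_inv_cancel_left_of_invertible, Matrix.inv_mul_cancel_left_of_invertible,
      Matrix.mul_inv_of_invertible, Matrix.inv_mul_of_invertible,
      Matrix.mul_one, Matrix.one_mul]
  have hmono : (A⁻¹ - B⁻¹).PosSemidef := by
    rw [hkey]
    have := hX.conjTranspose_mul_mul_same (B⁻¹)
    rwa [hB.inv.isHermitian.eq] at this
  have htr : B⁻¹.trace ≤ A⁻¹.trace := by
    have := trace_nonneg_of_posSemidef hmono
    rw [Matrix.trace_sub] at this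
    linarith
  simp only [fA, ← hAdef, ← hBdef]
  linarith
end

section
/- Let C be a real q×r matrix such that C Cᵀ is invertible, and let u ∈ ℝʳ be such that the scalar s := uᵀ(I − Cᵀ (C Cᵀ)⁻¹ C) u is nonzero. Let C' be the (q+1)×r matrix obtained by appending uᵀ as a new last row of C. Then C' C'ᵀ is invertible and tr[(C' C'ᵀ)⁻¹] = tr[(C Cᵀ)⁻¹] + (uᵀ Cᵀ (C Cᵀ)⁻² C u + 1)/s. -/
open Matrix

lemma my_trace_submatrix_equiv {m n α : Type*} [Fintype m] [Fintype n] [AddCommMonoid α]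
    (A : Matrix m m α) (e : n ≃ m) : (A.submatrix e e).trace = A.trace := by
  simp only [Matrix.trace, Matrix.diag, Matrix.submatrix_apply]
  exact e.sum_comp fun i => A i i

lemma my_trace_fromBlocks {m n α : Type*} [Fintype m] [Fintype n] [AddCommMonoid α]
    (A : Matrix m m α) (B : Matrix m n α) (C : Matrix n m α) (D : Matrix n n α) :
    (fromBlocks A B C D).trace = A.trace + D.trace := by
  simp only [Matrix.trace, Matrix.diag, Fintype.sum_sum_type,
    fromBlocks_apply₁₁, fromBlocks_apply₂₂]

/-- Trace update rule of the A-optimality greedy method in the underdetermined case: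
if `C Cᵀ` is invertible and `s = uᵀ(I − Cᵀ(C Cᵀ)⁻¹C)u ≠ 0`, then for the matrix `C'`
obtained by appending the new row `uᵀ` to `C`, the matrix `C' C'ᵀ` is invertible and
`tr[(C' C'ᵀ)⁻¹] = tr[(C Cᵀ)⁻¹] + (uᵀ Cᵀ (C Cᵀ)⁻² C u + 1)/s`. -/
theorem trace_inv_row_append {q r : ℕ}
    (C : Matrix (Fin q) (Fin r) ℝ) (u : Fin r → ℝ)
    (hC : IsUnit (C * Cᵀ))
    (hs : u ⬝ᵥ (((1 : Matrix (Fin r) (Fin r) ℝ) - Cᵀ * (C * Cᵀ)⁻¹ * C) *ᵥ u) ≠ 0) :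
    IsUnit ((Matrix.of (Fin.snoc C u) : Matrix (Fin (q + 1)) (Fin r) ℝ)
        * (Matrix.of (Fin.snoc C u) : Matrix (Fin (q + 1)) (Fin r) ℝ)ᵀ) ∧
      ((Matrix.of (Fin.snoc C u) : Matrix (Fin (q + 1)) (Fin r) ℝ)
        * (Matrix.of (Fin.snoc C u) : Matrix (Fin (q + 1)) (Fin r) ℝ)ᵀ)⁻¹.trace
      = (C * Cᵀ)⁻¹.trace
        + (u ⬝ᵥ ((Cᵀ * ((C * Cᵀ)⁻¹ * (C * Cᵀ)⁻¹) * C) *ᵥ u) + 1)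
          / (u ⬝ᵥ (((1 : Matrix (Fin r) (Fin r) ℝ) - Cᵀ * (C * Cᵀ)⁻¹ * C) *ᵥ u)) := by
  set M : Matrix (Fin (q + 1)) (Fin r) ℝ := Matrix.of (Fin.snoc C u) with hM
  set A : Matrix (Fin q) (Fin q) ℝ := C * Cᵀ with hA
  set s : ℝ := u ⬝ᵥ (((1 : Matrix (Fin r) (Fin r) ℝ) - Cᵀ * A⁻¹ * C) *ᵥ u) with hsdef
  set v : Fin q → ℝ := C *ᵥ u with hv
  -- rewrite s
  have hs' : s = u ⬝ᵥ u - v ⬝ᵥ (A⁻¹ *ᵥ v) := by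
    rw [hsdef, sub_mulVec, dotProduct_sub, one_mulVec, hv]
    congr 1
    rw [Matrix.mul_assoc, ← mulVec_mulVec, dotProduct_mulVec, vecMul_transpose,
      ← mulVec_mulVec]
  -- the submatrix identity
  have hsub : M.submatrix finSumFinEquiv id = fromRows C (replicateRow (Fin 1) u) := by
    ext i j
    rcases i with i | i
    · have h1 : (finSumFinEquiv (Sum.inl i) : Fin (q + 1)) = i.castSucc := rfl
      simp only [submatrix_apply, h1, id_eq, fromRows_apply_inl, hM, Matrix.of_apply,
        Fin.snoc_castSucc]
      exact congrFun (Fin.snoc_castSucc (α := fun _ => Fin r → ℝ) (p := C) (x := u) i) j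
    · have h1 : (finSumFinEquiv (Sum.inr i) : Fin (q + 1)) = Fin.last q := by
        ext; simp [Subsingleton.elim i 0]
      simp [hM, h1]
      exact congrFun (Fin.snoc_last (α := fun _ => Fin r → ℝ) (p := C) (x := u)) j
  have hMM : (M * Mᵀ).submatrix finSumFinEquiv finSumFinEquiv
      = fromBlocks A (replicateCol (Fin 1) v) (replicateRow (Fin 1) v) (Matrix.of fun _ _ => u ⬝ᵥ u) := by
    rw [← Matrix.submatrix_mul_equiv M Mᵀ (finSumFinEquiv) (Equiv.refl (Fin r))
      (finSumFinEquiv), Equiv.coe_refl, ← transpose_submatrix, hsub, transpose_fromRows,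
      transpose_replicateRow, fromRows_mul_fromCols, ← replicateCol_mulVec, ← replicateRow_vecMul, vecMul_transpose,
      replicateRow_mul_replicateCol, ← hv]
  -- invertibility infrastructure
  have iA : Invertible A := hC.nonempty_invertible.some
  have hinvA : ⅟A = A⁻¹ := invOf_eq_nonsing_inv A
  set D : Matrix (Fin 1) (Fin 1) ℝ := Matrix.of fun _ _ => u ⬝ᵥ u with hD
  have hSchur : D - replicateRow (Fin 1) v * ⅟A * replicateCol (Fin 1) v = s • (1 : Matrix (Fin 1) (Fin 1) ℝ) := by
    have hentry : (replicateRow (Fin 1) v * A⁻¹ * replicateCol (Fin 1) v) 0 0 = v ⬝ᵥ (A⁻¹ *ᵥ v) := by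
      rw [Matrix.mul_assoc, ← replicateCol_mulVec]
      exact replicateRow_mul_replicateCol_apply _ _ 0 0
    ext i j
    have hi : i = 0 := Subsingleton.elim i 0
    have hj : j = 0 := Subsingleton.elim j 0
    subst hi; subst hj
    simp [hD, hinvA, hentry, hs', smul_eq_mul, Matrix.one_apply]
  have iS : Invertible (D - replicateRow (Fin 1) v * ⅟A * replicateCol (Fin 1) v) := by
    rw [hSchur]
    exact (IsUnit.nonempty_invertible (by
      rw [isUnit_iff_isUnit_det, det_fin_one]
      simpa [Matrix.one_apply] using hs.isUnit)).some
  have iN : Invertible (fromBlocks A (replicateCol (Fin 1) v) (replicateRow (Fin 1) v) D) :=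
    Matrix.fromBlocks₁₁Invertible A _ _ D
  have hUnit : IsUnit (M * Mᵀ) := by
    rw [← Matrix.isUnit_submatrix_equiv finSumFinEquiv finSumFinEquiv, hMM]
    exact isUnit_of_invertible _
  refine ⟨hUnit, ?_⟩
  -- trace computation
  have htr : (M * Mᵀ)⁻¹.trace
      = ((fromBlocks A (replicateCol (Fin 1) v) (replicateRow (Fin 1) v) D)⁻¹).trace := by
    rw [← hMM, Matrix.inv_submatrix_equiv, my_trace_submatrix_equiv]
  rw [htr, ← invOf_eq_nonsing_inv, Matrix.invOf_fromBlocks₁₁_eq, my_trace_fromBlocks]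
  -- compute ⅟ of the Schur complement
  have hinvS : ⅟(D - replicateRow (Fin 1) v * ⅟A * replicateCol (Fin 1) v)
      = s⁻¹ • (1 : Matrix (Fin 1) (Fin 1) ℝ) := by
    apply invOf_eq_right_inv
    rw [hSchur, smul_mul_smul_comm, mul_inv_cancel₀ hs, one_mul, one_smul]
  rw [hinvS, hinvA]
  have htr1 : (s⁻¹ • (1 : Matrix (Fin 1) (Fin 1) ℝ)).trace = s⁻¹ := by
    simp [Matrix.trace_smul]
  rw [trace_add, htr1]
  -- middle term
  have hmid : (A⁻¹ * replicateCol (Fin 1) v * (s⁻¹ • (1 : Matrix (Fin 1) (Fin 1) ℝ)) * replicateRow (Fin 1) v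
      * A⁻¹).trace = s⁻¹ * (v ⬝ᵥ ((A⁻¹ * A⁻¹) *ᵥ v)) := by
    rw [Matrix.trace_mul_comm]
    have hrew : A⁻¹ * (A⁻¹ * replicateCol (Fin 1) v * (s⁻¹ • (1 : Matrix (Fin 1) (Fin 1) ℝ))
          * replicateRow (Fin 1) v)
        = s⁻¹ • (replicateCol (Fin 1) ((A⁻¹ * A⁻¹) *ᵥ v) * replicateRow (Fin 1) v) := by
      conv_rhs => rw [replicateCol_mulVec]
      simp only [Matrix.mul_smul, Matrix.smul_mul, Matrix.mul_one, Matrix.mul_assoc]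
    rw [hrew, trace_smul]
    erw [trace_replicateCol_mul_replicateRow (ι := Fin 1)]
    rw [smul_eq_mul]
    rw [dotProduct_comm]
  rw [hmid]
  -- final scalar identity
  have hgoal : u ⬝ᵥ ((Cᵀ * (A⁻¹ * A⁻¹) * C) *ᵥ u) = v ⬝ᵥ ((A⁻¹ * A⁻¹) *ᵥ v) := by
    rw [Matrix.mul_assoc, ← mulVec_mulVec, dotProduct_mulVec, vecMul_transpose, ← mulVec_mulVec,
      hv]
  rw [hgoal]
  field_simp
  ring
end
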